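/- Let m ≥ 2. The space of complex m×m matrices A with det(A^{(k)}) ≠ 0 for all k = 1, …, m and det(Â^{(j)}) ≠ 0 for all j = 1, …, m-1, where Â is obtained from A by deleting its first column (with the subspace topology from the space of m×m complex matrices), is homotopy equivalent to the (2m-1)-torus (S¹)^{2m-1}. -/

import Mathlib

open Matrix

namespace MLUAux

/-- Expansion of a determinant as affine function of the bottom-right entry. -/
lemma detExpand {n : ℕ} (C : Matrix (Fin (n+1)) (Fin (n+1)) ℂ) :
    C.det = C (Fin.last n) (Fin.last n) * (C.submatrix Fin.castSucc Fin.castSucc).det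
      + (C.updateRow (Fin.last n) (Function.update (C (Fin.last n)) (Fin.last n) 0)).det := by
  have hsingle : (C.updateRow (Fin.last n) (Pi.single (Fin.last n) 1)).det
      = (C.submatrix Fin.castSucc Fin.castSucc).det := by
    rw [Matrix.det_succ_row _ (Fin.last n)]
    rw [Finset.sum_eq_single (Fin.last n)]
    · have hsub : (C.updateRow (Fin.last n) (Pi.single (Fin.last n) 1)).submatrix
          (Fin.last n).succAbove (Fin.last n).succAbove
          = C.submatrix Fin.castSucc Fin.castSucc := by
        ext a b
        rw [Fin.succAbove_last]
        simp only [Matrix.submatrix_apply]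
        rw [Matrix.updateRow_ne (Fin.castSucc_lt_last a).ne]
      rw [hsub]
      rw [Matrix.updateRow_self]
      simp only [Pi.single_eq_same, Fin.val_last, mul_one, ← two_mul, pow_mul,
        neg_one_sq, one_pow, one_mul]
    · intro j _ hj
      rw [Matrix.updateRow_self]
      simp [Pi.single_apply, hj]
    · simp
  have hrow : C (Fin.last n)
      = (C (Fin.last n) (Fin.last n)) • (Pi.single (Fin.last n) (1:ℂ) : Fin (n+1) → ℂ)
        + Function.update (C (Fin.last n)) (Fin.last n) 0 := by
    funext j
    by_cases h : j = Fin.last n <;>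
      simp [h, Pi.single_apply, Function.update_apply]
  calc C.det = (C.updateRow (Fin.last n)
        ((C (Fin.last n) (Fin.last n)) • (Pi.single (Fin.last n) (1:ℂ) : Fin (n+1) → ℂ)
          + Function.update (C (Fin.last n)) (Fin.last n) 0)).det := by
        rw [← hrow, Matrix.updateRow_eq_self]
    _ = _ := by
        rw [Matrix.det_updateRow_add, Matrix.det_updateRow_smul, hsingle]


variable {m : ℕ}

/-- Update a single entry of a matrix. -/
def updE (M : Matrix (Fin m) (Fin m) ℂ) (i j : Fin m) (c : ℂ) : Matrix (Fin m) (Fin m) ℂ :=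
  M.updateRow i (Function.update (M i) j c)

lemma updE_apply (M : Matrix (Fin m) (Fin m) ℂ) (i j : Fin m) (c : ℂ) (a b : Fin m) :
    updE M i j c a b = if a = i then (if b = j then c else M i b) else M a b := by
  unfold updE
  by_cases h : a = i
  · subst h; rw [Matrix.updateRow_self]; simp [Function.update_apply]
  · rw [Matrix.updateRow_ne h, if_neg h]

lemma updE_apply_same (M : Matrix (Fin m) (Fin m) ℂ) (i j : Fin m) (c : ℂ) :
    updE M i j c i j = c := by simp [updE_apply]

lemma updE_apply_ne (M : Matrix (Fin m) (Fin m) ℂ) (i j : Fin m) (c : ℂ) {a b : Fin m}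
    (h : a ≠ i ∨ b ≠ j) : updE M i j c a b = M a b := by
  rcases h with h | h
  · rw [updE_apply, if_neg h]
  · rw [updE_apply]
    by_cases h2 : a = i
    · subst h2; rw [if_pos rfl, if_neg h]
    · rw [if_neg h2]

lemma updE_updE (M : Matrix (Fin m) (Fin m) ℂ) (i j : Fin m) (c c' : ℂ) :
    updE (updE M i j c) i j c' = updE M i j c' := by
  ext a b
  by_cases h : a = i
  · subst h
    by_cases h2 : b = j
    · subst h2; rw [updE_apply_same, updE_apply_same]
    · rw [updE_apply, if_pos rfl, if_neg h2, updE_apply, if_pos rfl, if_neg h2,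
        updE_apply_ne _ _ _ _ (Or.inr h2)]
  · rw [updE_apply_ne _ _ _ _ (Or.inl h), updE_apply_ne _ _ _ _ (Or.inl h),
      updE_apply_ne _ _ _ _ (Or.inl h)]

lemma updE_self (M : Matrix (Fin m) (Fin m) ℂ) (i j : Fin m) :
    updE M i j (M i j) = M := by
  ext a b
  by_cases h : a = i
  · subst h
    by_cases h2 : b = j
    · subst h2; rw [updE_apply_same]
    · rw [updE_apply_ne _ _ _ _ (Or.inr h2)]
  · rw [updE_apply_ne _ _ _ _ (Or.inl h)]

/-- `Dm m k M` is the `k`-th leading principal minor of `M` (and `0` if `k > m`). -/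
def Dm (m : ℕ) (k : ℕ) (M : Matrix (Fin m) (Fin m) ℂ) : ℂ :=
  if h : k ≤ m then (M.submatrix (Fin.castLE h) (Fin.castLE h)).det else 0

/-- `Em m j M` is the `j`-th leading minor of the matrix obtained by deleting the
first column of `M` (and `0` if `j ≥ m`). -/
def Em (m : ℕ) (j : ℕ) (M : Matrix (Fin m) (Fin m) ℂ) : ℂ :=
  if h : j < m then
    (Matrix.of fun a b : Fin j =>
      M (Fin.castLE h.le a) ⟨(b : ℕ) + 1, by have := b.isLt; omega⟩).det
  else 0

lemma Dm_zero (M : Matrix (Fin m) (Fin m) ℂ) : Dm m 0 M = 1 := by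
  rw [Dm, dif_pos (Nat.zero_le m)]
  exact Matrix.det_fin_zero

lemma Em_zero (hm : 0 < m) (M : Matrix (Fin m) (Fin m) ℂ) : Em m 0 M = 1 := by
  rw [Em, dif_pos hm]
  exact Matrix.det_fin_zero

lemma Dm_succ (M : Matrix (Fin m) (Fin m) ℂ) {k : ℕ} (hk : k < m) :
    Dm m (k+1) M = M ⟨k, hk⟩ ⟨k, hk⟩ * Dm m k M
      + Dm m (k+1) (updE M ⟨k, hk⟩ ⟨k, hk⟩ 0) := by
  have hk1 : k + 1 ≤ m := hk
  simp only [Dm]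
  rw [dif_pos hk1, dif_pos hk.le]
  set C : Matrix (Fin (k+1)) (Fin (k+1)) ℂ :=
    M.submatrix (Fin.castLE hk) (Fin.castLE hk) with hC
  have h1 : C (Fin.last k) (Fin.last k) = M ⟨k, hk⟩ ⟨k, hk⟩ := rfl
  have h2 : C.submatrix Fin.castSucc Fin.castSucc
      = M.submatrix (Fin.castLE hk.le) (Fin.castLE hk.le) := by
    ext a b; rfl
  have h3 : C.updateRow (Fin.last k) (Function.update (C (Fin.last k)) (Fin.last k) 0)
      = (updE M ⟨k, hk⟩ ⟨k, hk⟩ 0).submatrix (Fin.castLE hk1) (Fin.castLE hk1) := by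
    ext a b
    by_cases ha : a = Fin.last k
    · subst ha
      rw [Matrix.updateRow_self]
      by_cases hb : b = Fin.last k
      · subst hb
        rw [Function.update_self]
        have : (Fin.castLE hk (Fin.last k)) = (⟨k, hk⟩ : Fin m) := rfl
        rw [Matrix.submatrix_apply, this, updE_apply_same]
      · rw [Function.update_of_ne hb, Matrix.submatrix_apply]
        rw [updE_apply_ne]
        · rfl
        · right
          intro hcon
          exact hb (by
            have : (b : ℕ) = k := congrArg Fin.val hcon
            exact Fin.ext (by simpa using this))
    · rw [Matrix.updateRow_ne ha, Matrix.submatrix_apply]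
      rw [updE_apply_ne]
      · rfl
      · left
        intro hcon
        exact ha (by
          have : (a : ℕ) = k := congrArg Fin.val hcon
          exact Fin.ext (by simpa using this))
  rw [detExpand C, h1, h2, h3, dif_pos hk1]

lemma Em_succ (M : Matrix (Fin m) (Fin m) ℂ) {k : ℕ} (hk : k + 1 < m) :
    Em m (k+1) M = M ⟨k, by omega⟩ ⟨k+1, hk⟩ * Em m k M
      + Em m (k+1) (updE M ⟨k, by omega⟩ ⟨k+1, hk⟩ 0) := by
  have hk' : (k : ℕ) < m := by omega
  simp only [Em]
  rw [dif_pos hk, dif_pos hk']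
  set C : Matrix (Fin (k+1)) (Fin (k+1)) ℂ :=
    Matrix.of fun a b : Fin (k+1) =>
      M (Fin.castLE hk.le a) ⟨(b : ℕ) + 1, by have := b.isLt; omega⟩ with hC
  have h1 : C (Fin.last k) (Fin.last k) = M ⟨k, by omega⟩ ⟨k+1, hk⟩ := rfl
  have h2 : C.submatrix Fin.castSucc Fin.castSucc
      = Matrix.of fun a b : Fin k =>
        M (Fin.castLE hk'.le a) ⟨(b : ℕ) + 1, by have := b.isLt; omega⟩ := by
    ext a b; rfl
  have h3 : C.updateRow (Fin.last k) (Function.update (C (Fin.last k)) (Fin.last k) 0)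
      = Matrix.of fun a b : Fin (k+1) =>
        (updE M ⟨k, by omega⟩ ⟨k+1, hk⟩ 0) (Fin.castLE hk.le a)
          ⟨(b : ℕ) + 1, by have := b.isLt; omega⟩ := by
    ext a b
    by_cases ha : a = Fin.last k
    · subst ha
      rw [Matrix.updateRow_self]
      by_cases hb : b = Fin.last k
      · subst hb
        rw [Function.update_self, Matrix.of_apply]
        have h4 : (updE M ⟨k, by omega⟩ ⟨k+1, hk⟩ 0) ⟨k, by omega⟩ ⟨k+1, hk⟩ = 0 :=
          updE_apply_same _ _ _ _
        exact h4.symm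
      · rw [Function.update_of_ne hb, Matrix.of_apply, updE_apply_ne]
        · rfl
        · right
          intro hcon
          exact hb (by
            have : (b : ℕ) + 1 = k + 1 := congrArg Fin.val hcon
            exact Fin.ext (by simp; omega))
    · rw [Matrix.updateRow_ne ha, Matrix.of_apply, updE_apply_ne]
      · rfl
      · left
        intro hcon
        exact ha (by
          have : (a : ℕ) = k := congrArg Fin.val hcon
          exact Fin.ext (by simpa using this))
  rw [detExpand C, h1, h2, h3, dif_pos hk]

lemma Dm_updE (M : Matrix (Fin m) (Fin m) ℂ) {l : ℕ} (i j : Fin m) (c : ℂ)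
    (h : l ≤ (i : ℕ) ∨ l ≤ (j : ℕ)) : Dm m l (updE M i j c) = Dm m l M := by
  rw [Dm, Dm]
  by_cases hl : l ≤ m
  · rw [dif_pos hl, dif_pos hl]
    congr 1
    ext a b
    rw [Matrix.submatrix_apply, Matrix.submatrix_apply, updE_apply_ne]
    rcases h with h | h
    · left; intro hcon
      have : (a : ℕ) = (i : ℕ) := congrArg Fin.val hcon
      have := a.isLt
      simp at this
      omega
    · right; intro hcon
      have : (b : ℕ) = (j : ℕ) := congrArg Fin.val hcon
      have := b.isLt
      simp at this
      omega
  · rw [dif_neg hl, dif_neg hl]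

lemma Em_updE (M : Matrix (Fin m) (Fin m) ℂ) {l : ℕ} (i j : Fin m) (c : ℂ)
    (h : l ≤ (i : ℕ)) : Em m l (updE M i j c) = Em m l M := by
  rw [Em, Em]
  by_cases hl : l < m
  · rw [dif_pos hl, dif_pos hl]
    congr 1
    ext a b
    rw [Matrix.of_apply, Matrix.of_apply, updE_apply_ne]
    left
    intro hcon
    have : (a : ℕ) = (i : ℕ) := congrArg Fin.val hcon
    have := a.isLt
    simp at this
    omega
  · rw [dif_neg hl, dif_neg hl]

/-- prescribed value for the `(k+1)`-st leading minor -/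
def zd (m : ℕ) (z : Fin (2*m-1) → ℂ) (k : ℕ) : ℂ :=
  if h : k < m then z ⟨k, by omega⟩ else 1

def zd' (m : ℕ) (z : Fin (2*m-1) → ℂ) : ℕ → ℂ
  | 0 => 1
  | (k+1) => zd m z k

/-- prescribed value for the `(k+1)`-st minor of the shifted matrix -/
def ze (m : ℕ) (z : Fin (2*m-1) → ℂ) (k : ℕ) : ℂ :=
  if h : k < m - 1 then z ⟨m + k, by omega⟩ else 1

def ze' (m : ℕ) (z : Fin (2*m-1) → ℂ) : ℕ → ℂ
  | 0 => 1
  | (k+1) => ze m z k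

noncomputable def step (m : ℕ) (z : Fin (2*m-1) → ℂ) (M : Matrix (Fin m) (Fin m) ℂ) (k : ℕ) :
    Matrix (Fin m) (Fin m) ℂ :=
  if hk : k < m then
    let i : Fin m := ⟨k, hk⟩
    let M1 := updE M i i ((zd m z k - Dm m (k+1) (updE M i i 0)) / zd' m z k)
    if hk2 : k + 1 < m then
      updE M1 i ⟨k+1, hk2⟩ ((ze m z k - Em m (k+1) (updE M1 i ⟨k+1, hk2⟩ 0)) / ze' m z k)
    else M1
  else M

noncomputable def build (m : ℕ) (x : Matrix (Fin m) (Fin m) ℂ) (z : Fin (2*m-1) → ℂ) :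
    ℕ → Matrix (Fin m) (Fin m) ℂ
  | 0 => x
  | (k+1) => step m z (build m x z k) k

noncomputable def Theta (m : ℕ) (x : Matrix (Fin m) (Fin m) ℂ) (z : Fin (2*m-1) → ℂ) :
    Matrix (Fin m) (Fin m) ℂ :=
  build m x z m

lemma zd'_ne_zero {z : Fin (2*m-1) → ℂ} (hz : ∀ i, z i ≠ 0) (k : ℕ) :
    zd' m z k ≠ 0 := by
  cases k with
  | zero => exact one_ne_zero
  | succ k =>
    rw [zd', zd]
    by_cases h : k < m
    · rw [dif_pos h]; exact hz _
    · rw [dif_neg h]; exact one_ne_zero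

lemma ze'_ne_zero {z : Fin (2*m-1) → ℂ} (hz : ∀ i, z i ≠ 0) (k : ℕ) :
    ze' m z k ≠ 0 := by
  cases k with
  | zero => exact one_ne_zero
  | succ k =>
    rw [ze', ze]
    by_cases h : k < m - 1
    · rw [dif_pos h]; exact hz _
    · rw [dif_neg h]; exact one_ne_zero

/-- The key invariant: after `k` steps, all leading minors up to size `k` (of both
kinds) have the prescribed values. -/
lemma build_spec (x : Matrix (Fin m) (Fin m) ℂ) {z : Fin (2*m-1) → ℂ}
    (hz : ∀ i, z i ≠ 0) (k : ℕ) (hk : k ≤ m) :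
    (∀ l ≤ k, Dm m l (build m x z k) = zd' m z l) ∧
    (∀ l ≤ k, l < m → Em m l (build m x z k) = ze' m z l) := by
  induction k with
  | zero =>
    constructor
    · intro l hl
      interval_cases l
      rw [Dm_zero]; rfl
    · intro l hl _
      interval_cases l
      rw [Em_zero (by omega)]; rfl
  | succ k ih =>
    have hkm : k < m := hk
    obtain ⟨ihD, ihE⟩ := ih (le_of_lt hkm)
    have hbuild : build m x z (k+1) = step m z (build m x z k) k := rfl
    set M := build m x z k with hM
    rw [hbuild]
    unfold step
    rw [dif_pos hkm]
    set i : Fin m := ⟨k, hkm⟩ with hi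
    set v : ℂ := (zd m z k - Dm m (k+1) (updE M i i 0)) / zd' m z k with hv
    set M1 := updE M i i v with hM1
    -- minors of M1
    have hD1 : ∀ l ≤ k, Dm m l M1 = zd' m z l := fun l hl =>
      (Dm_updE M i i v (Or.inl hl)).trans (ihD l hl)
    have hE1 : ∀ l ≤ k, l < m → Em m l M1 = ze' m z l := fun l hl hlm =>
      (Em_updE M i i v hl).trans (ihE l hl hlm)
    have hDsucc : Dm m (k+1) M1 = zd m z k := by
      rw [Dm_succ M1 hkm]
      have e1 : M1 i i = v := updE_apply_same _ _ _ _
      have e2 : updE M1 i i 0 = updE M i i 0 := updE_updE _ _ _ _ _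
      rw [e1, e2, hD1 k le_rfl, hv]
      field_simp [zd'_ne_zero hz k]
      ring
    by_cases hk2 : k + 1 < m
    · rw [dif_pos hk2]
      set j2 : Fin m := ⟨k+1, hk2⟩ with hj2
      set w : ℂ := (ze m z k - Em m (k+1) (updE M1 i j2 0)) / ze' m z k with hw
      have hD2 : ∀ l ≤ k + 1, Dm m l (updE M1 i j2 w) = zd' m z l := by
        intro l hl
        rw [Dm_updE M1 i j2 w (Or.inr hl)]
        rcases Nat.lt_or_ge l (k+1) with h | h
        · exact hD1 l (by omega)
        · have : l = k + 1 := by omega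
          subst this
          rw [hDsucc]; rfl
      have hE2 : ∀ l ≤ k, l < m → Em m l (updE M1 i j2 w) = ze' m z l := fun l hl hlm =>
        (Em_updE M1 i j2 w hl).trans (hE1 l hl hlm)
      have hEsucc : Em m (k+1) (updE M1 i j2 w) = ze m z k := by
        rw [Em_succ _ hk2]
        have e1 : (updE M1 i j2 w) i j2 = w := updE_apply_same _ _ _ _
        have e2 : updE (updE M1 i j2 w) i j2 0 = updE M1 i j2 0 := updE_updE _ _ _ _ _
        have e3 : Em m k (updE M1 i j2 w) = ze' m z k :=
          hE2 k le_rfl (by omega)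
        rw [e1, e2, e3, hw]
        field_simp [ze'_ne_zero hz k]
        ring
      constructor
      · intro l hl
        exact hD2 l hl
      · intro l hl hlm
        rcases Nat.lt_or_ge l (k+1) with h | h
        · exact hE2 l (by omega) hlm
        · have : l = k + 1 := by omega
          subst this
          rw [hEsucc]; rfl
    · rw [dif_neg hk2]
      constructor
      · intro l hl
        rcases Nat.lt_or_ge l (k+1) with h | h
        · exact hD1 l (by omega)
        · have : l = k + 1 := by omega
          subst this
          rw [hDsucc]; rfl
      · intro l hl hlm
        have : l ≤ k := by omega
        exact hE1 l this hlm

/-- If the prescribed values are the actual minors of `A`, the recursion reproduces `A`. -/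
lemma build_fix (A : Matrix (Fin m) (Fin m) ℂ) {z : Fin (2*m-1) → ℂ}
    (hD : ∀ l, l ≤ m → Dm m l A ≠ 0) (hE : ∀ l, l < m → Em m l A ≠ 0)
    (hzd : ∀ k (h : k < m), z ⟨k, by omega⟩ = Dm m (k+1) A)
    (hze : ∀ k (h : k < m - 1), z ⟨m + k, by omega⟩ = Em m (k+1) A)
    (k : ℕ) (hk : k ≤ m) : build m A z k = A := by
  induction k with
  | zero => rfl
  | succ k ih =>
    have hkm : k < m := hk
    have hbuild : build m A z (k+1) = step m z (build m A z k) k := rfl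
    rw [hbuild, ih (le_of_lt hkm)]
    unfold step
    rw [dif_pos hkm]
    set i : Fin m := ⟨k, hkm⟩ with hi
    have hzdk : zd m z k = Dm m (k+1) A := by rw [zd, dif_pos hkm]; exact hzd k hkm
    have hzd'k : zd' m z k = Dm m k A := by
      cases k with
      | zero => rw [zd', Dm_zero]
      | succ k' => rw [zd', zd, dif_pos (by omega : k' < m)]; exact hzd k' (by omega)
    have hv : (zd m z k - Dm m (k+1) (updE A i i 0)) / zd' m z k = A i i := by
      rw [hzdk, hzd'k, Dm_succ A hkm]
      have hDk := hD k (by omega)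
      field_simp
      rw [hi]; ring
    dsimp only
    rw [hv, updE_self]
    by_cases hk2 : k + 1 < m
    · rw [dif_pos hk2]
      set j2 : Fin m := ⟨k+1, hk2⟩ with hj2
      have hzek : ze m z k = Em m (k+1) A := by
        rw [ze, dif_pos (by omega : k < m - 1)]; exact hze k (by omega)
      have hze'k : ze' m z k = Em m k A := by
        cases k with
        | zero => rw [ze', Em_zero (by omega)]
        | succ k' => rw [ze', ze, dif_pos (by omega : k' < m - 1)]; exact hze k' (by omega)
      have hw : (ze m z k - Em m (k+1) (updE A i j2 0)) / ze' m z k = A i j2 := by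
        rw [hzek, hze'k, Em_succ A hk2]
        have hEk := hE k (by omega)
        field_simp
        rw [hi, hj2]; ring
      rw [hw, updE_self]
    · rw [dif_neg hk2]

lemma continuous_Dm (k : ℕ) :
    Continuous fun M : Matrix (Fin m) (Fin m) ℂ => Dm m k M := by
  unfold Dm
  by_cases h : k ≤ m
  · simp only [dif_pos h]
    exact (continuous_id.matrix_submatrix _ _).matrix_det
  · simp only [dif_neg h]
    exact continuous_const

lemma continuous_Em (j : ℕ) :
    Continuous fun M : Matrix (Fin m) (Fin m) ℂ => Em m j M := by
  unfold Em
  by_cases h : j < m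
  · simp only [dif_pos h]
    exact (continuous_matrix fun a b => continuous_id.matrix_elem _ _).matrix_det
  · simp only [dif_neg h]
    exact continuous_const

lemma continuous_updE {X : Type*} [TopologicalSpace X] {F : X → Matrix (Fin m) (Fin m) ℂ}
    {c : X → ℂ} (hF : Continuous F) (hc : Continuous c) (i j : Fin m) :
    Continuous fun p => updE (F p) i j (c p) := by
  apply continuous_matrix
  intro a b
  by_cases h : a = i
  · by_cases h2 : b = j
    · simp only [updE_apply, if_pos h, if_pos h2]
      exact hc
    · simp only [updE_apply, if_pos h, if_neg h2]
      exact hF.matrix_elem _ _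
  · simp only [updE_apply, if_neg h]
    exact hF.matrix_elem _ _

variable (m) in
/-- The parameter space for continuity. -/
abbrev P := Matrix (Fin m) (Fin m) ℂ × (Fin (2*m-1) → {w : ℂ // w ≠ 0})

lemma continuous_zd (k : ℕ) :
    Continuous fun p : P m => zd m (fun i => (p.2 i : ℂ)) k := by
  unfold zd
  by_cases h : k < m
  · simp only [dif_pos h]
    exact continuous_subtype_val.comp ((continuous_apply _).comp continuous_snd)
  · simp only [dif_neg h]
    exact continuous_const

lemma continuous_ze (k : ℕ) :
    Continuous fun p : P m => ze m (fun i => (p.2 i : ℂ)) k := by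
  unfold ze
  by_cases h : k < m - 1
  · simp only [dif_pos h]
    exact continuous_subtype_val.comp ((continuous_apply _).comp continuous_snd)
  · simp only [dif_neg h]
    exact continuous_const

lemma continuous_zd' (k : ℕ) :
    Continuous fun p : P m => zd' m (fun i => (p.2 i : ℂ)) k := by
  cases k with
  | zero => exact continuous_const
  | succ k => exact continuous_zd k

lemma continuous_ze' (k : ℕ) :
    Continuous fun p : P m => ze' m (fun i => (p.2 i : ℂ)) k := by
  cases k with
  | zero => exact continuous_const
  | succ k => exact continuous_ze k

lemma continuous_build (k : ℕ) :
    Continuous fun p : P m => build m p.1 (fun i => (p.2 i : ℂ)) k := by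
  induction k with
  | zero => exact continuous_fst
  | succ k ih =>
    have hb : ∀ p : P m, build m p.1 (fun i => (p.2 i : ℂ)) (k+1)
        = step m (fun i => (p.2 i : ℂ)) (build m p.1 (fun i => (p.2 i : ℂ)) k) k :=
      fun p => rfl
    simp only [hb]
    unfold step
    by_cases hk : k < m
    · simp only [dif_pos hk]
      have hv : Continuous fun p : P m =>
          (zd m (fun i => (p.2 i : ℂ)) k
            - Dm m (k+1) (updE (build m p.1 (fun i => (p.2 i : ℂ)) k) ⟨k, hk⟩ ⟨k, hk⟩ 0))
          / zd' m (fun i => (p.2 i : ℂ)) k := by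
        apply Continuous.div₀
        · exact (continuous_zd k).sub
            ((continuous_Dm (k+1)).comp (continuous_updE ih continuous_const _ _))
        · exact continuous_zd' k
        · intro p
          exact zd'_ne_zero (fun i => (p.2 i).2) k
      have hM1 : Continuous fun p : P m =>
          updE (build m p.1 (fun i => (p.2 i : ℂ)) k) ⟨k, hk⟩ ⟨k, hk⟩
            ((zd m (fun i => (p.2 i : ℂ)) k
              - Dm m (k+1) (updE (build m p.1 (fun i => (p.2 i : ℂ)) k) ⟨k, hk⟩ ⟨k, hk⟩ 0))
            / zd' m (fun i => (p.2 i : ℂ)) k) := continuous_updE ih hv _ _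
      by_cases hk2 : k + 1 < m
      · simp only [dif_pos hk2]
        apply continuous_updE hM1
        apply Continuous.div₀
        · exact (continuous_ze k).sub
            ((continuous_Em (k+1)).comp (continuous_updE hM1 continuous_const _ _))
        · exact continuous_ze' k
        · intro p
          exact ze'_ne_zero (fun i => (p.2 i).2) k
      · simp only [dif_neg hk2]
        exact hM1
    · simp only [dif_neg hk]
      exact ih

lemma continuous_Theta :
    Continuous fun p : P m => Theta m p.1 (fun i => (p.2 i : ℂ)) :=
  continuous_build m

variable (m) in
def goodSet : Set (Matrix (Fin m) (Fin m) ℂ) :=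
  {A | (∀ l : ℕ, 1 ≤ l → l ≤ m → Dm m l A ≠ 0) ∧
       (∀ j : ℕ, 1 ≤ j → j < m → Em m j A ≠ 0)}

noncomputable def PsiFun (A : Matrix (Fin m) (Fin m) ℂ) (hA : A ∈ goodSet m)
    (i : Fin (2*m-1)) : {w : ℂ // w ≠ 0} :=
  if h : (i : ℕ) < m then ⟨Dm m ((i:ℕ)+1) A, hA.1 _ (by omega) (by omega)⟩
  else ⟨Em m ((i:ℕ) - m + 1) A, hA.2 _ (by omega) (by have := i.isLt; omega)⟩

lemma Theta_mem (x : Matrix (Fin m) (Fin m) ℂ) {z : Fin (2*m-1) → ℂ}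
    (hz : ∀ i, z i ≠ 0) : Theta m x z ∈ goodSet m := by
  obtain ⟨hD, hE⟩ := build_spec x hz m le_rfl
  rw [Theta]
  constructor
  · intro l _ h2
    rw [hD l h2]
    exact zd'_ne_zero hz l
  · intro j _ h2
    rw [hE j (by omega) h2]
    exact ze'_ne_zero hz j

lemma Theta_id (A : Matrix (Fin m) (Fin m) ℂ) (hA : A ∈ goodSet m) :
    Theta m A (fun i => (PsiFun A hA i : ℂ)) = A := by
  apply build_fix A _ _ _ _ m le_rfl
  · intro l hl
    cases l with
    | zero => rw [Dm_zero]; exact one_ne_zero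
    | succ l' => exact hA.1 _ (by omega) hl
  · intro l hl
    cases l with
    | zero => rw [Em_zero (by omega)]; exact one_ne_zero
    | succ l' => exact hA.2 _ (by omega) hl
  · intro k hk
    rw [PsiFun]
    split
    · rfl
    · next h => exact absurd hk h
  · intro k hk
    rw [PsiFun]
    split
    · next h =>
      have h' : m + k < m := h
      omega
    · show Em m (m + k - m + 1) A = Em m (k+1) A
      congr 2
      omega

lemma Psi_Theta_zero (z : Fin (2*m-1) → {w : ℂ // w ≠ 0}) (i : Fin (2*m-1)) :
    PsiFun (Theta m 0 (fun i => (z i : ℂ))) (Theta_mem 0 (fun i => (z i).2)) i = z i := by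
  obtain ⟨hD, hE⟩ := build_spec (0 : Matrix (Fin m) (Fin m) ℂ)
    (fun i => (z i).2) m le_rfl
  rw [← Theta] at hD hE
  apply Subtype.ext
  rw [PsiFun]
  split
  · next h =>
    show Dm m ((i:ℕ)+1) _ = (z i : ℂ)
    rw [hD ((i:ℕ)+1) (by omega)]
    rw [zd']
    rw [zd, dif_pos h]
  · next h =>
    have him := i.isLt
    show Em m ((i:ℕ) - m + 1) _ = (z i : ℂ)
    rw [hE ((i:ℕ) - m + 1) (by omega) (by omega)]
    rw [ze']
    rw [ze, dif_pos (by omega : (i:ℕ) - m < m - 1)]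
    congr 1
    exact congrArg z (Fin.ext (by show m + ((i:ℕ) - m) = (i:ℕ); omega))

noncomputable def PsiMap : C(↥(goodSet m), Fin (2*m-1) → {w : ℂ // w ≠ 0}) := by
  refine ⟨fun A => PsiFun A.1 A.2, ?_⟩
  apply continuous_pi
  intro i
  by_cases h : (i : ℕ) < m
  · simp only [PsiFun, dif_pos h]
    exact ((continuous_Dm _).comp continuous_subtype_val).subtype_mk _
  · simp only [PsiFun, dif_neg h]
    exact ((continuous_Em _).comp continuous_subtype_val).subtype_mk _

noncomputable def PhiMap : C(Fin (2*m-1) → {w : ℂ // w ≠ 0}, ↥(goodSet m)) := by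
  refine ⟨fun z => ⟨Theta m 0 (fun i => (z i : ℂ)), Theta_mem 0 (fun i => (z i).2)⟩, ?_⟩
  apply Continuous.subtype_mk
  exact (continuous_Theta (m := m)).comp (continuous_const.prodMk continuous_id)

noncomputable def bigHomotopy :
    ContinuousMap.Homotopy (ContinuousMap.id ↥(goodSet m)) ((PhiMap (m := m)).comp PsiMap) := by
  refine
    { toContinuousMap := ⟨fun q =>
        ⟨Theta m ((1 - (q.1 : ℝ)) • q.2.1) (fun i => (PsiFun q.2.1 q.2.2 i : ℂ)),
          Theta_mem _ (fun i => (PsiFun q.2.1 q.2.2 i).2)⟩, ?_⟩,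
      map_zero_left := ?_, map_one_left := ?_ }
  · apply Continuous.subtype_mk
    have hpair : Continuous (fun q : unitInterval × ↥(goodSet m) =>
        ((((1:ℝ) - (q.1:ℝ)) • q.2.1, fun i => PsiFun q.2.1 q.2.2 i) : P m)) := by
      apply Continuous.prodMk
      · exact ((continuous_const.sub
          ((continuous_subtype_val.comp continuous_fst))).smul
          (continuous_subtype_val.comp continuous_snd))
      · exact (PsiMap (m := m)).continuous.comp continuous_snd
    exact (continuous_Theta (m := m)).comp hpair
  · intro A
    apply Subtype.ext
    show Theta m ((1 - ((0:unitInterval) : ℝ)) • A.1) _ = A.1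
    have h0 : ((0:unitInterval) : ℝ) = 0 := rfl
    rw [h0, sub_zero, one_smul]
    exact Theta_id A.1 A.2
  · intro A
    apply Subtype.ext
    show Theta m ((1 - ((1:unitInterval) : ℝ)) • A.1) _ = _
    have h1 : ((1:unitInterval) : ℝ) = 1 := rfl
    rw [h1, sub_self, zero_smul]
    rfl

noncomputable def mainEquiv :
    ContinuousMap.HomotopyEquiv ↥(goodSet m) (Fin (2*m-1) → {w : ℂ // w ≠ 0}) where
  toFun := PsiMap
  invFun := PhiMap
  left_inv := (ContinuousMap.Homotopic.symm ⟨bigHomotopy⟩)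
  right_inv := by
    have h : (PsiMap (m := m)).comp PhiMap = ContinuousMap.id _ := by
      apply ContinuousMap.ext
      intro z
      funext i
      exact Psi_Theta_zero z i
    rw [h]

lemma toCircle_mem (w : {w : ℂ // w ≠ 0}) :
    ‖(w:ℂ)‖⁻¹ • (w:ℂ) ∈ Metric.sphere (0:ℂ) 1 := by
  have hw : ‖(w:ℂ)‖ ≠ 0 := norm_ne_zero_iff.mpr w.2
  rw [mem_sphere_zero_iff_norm, norm_smul, norm_inv, norm_norm, inv_mul_cancel₀ hw]

lemma fromCircle_ne (s : Metric.sphere (0:ℂ) 1) : (s:ℂ) ≠ 0 := by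
  have hs := mem_sphere_zero_iff_norm.mp s.2
  intro h0
  rw [h0] at hs
  simp at hs

/-- The map `w ↦ w / ‖w‖` from `ℂ ∖ {0}` to the unit circle. -/
noncomputable def toCircle : C({w : ℂ // w ≠ 0}, Metric.sphere (0:ℂ) 1) :=
  ⟨fun w => ⟨‖(w:ℂ)‖⁻¹ • (w:ℂ), toCircle_mem w⟩,
    Continuous.subtype_mk
      (((continuous_subtype_val.norm).inv₀
        (fun w : {w : ℂ // w ≠ 0} => norm_ne_zero_iff.mpr w.2)).smul
          continuous_subtype_val) toCircle_mem⟩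

noncomputable def fromCircle : C(Metric.sphere (0:ℂ) 1, {w : ℂ // w ≠ 0}) :=
  ⟨fun s => ⟨(s:ℂ), fromCircle_ne s⟩,
    Continuous.subtype_mk continuous_subtype_val fromCircle_ne⟩

lemma circleCoeff_ne (q : unitInterval × {w : ℂ // w ≠ 0}) :
    (((1 - (q.1 : ℝ)) * ‖(q.2 : ℂ)‖⁻¹ + (q.1 : ℝ)) : ℝ) • (q.2 : ℂ) ≠ 0 := by
  have hwpos : 0 < ‖(q.2 : ℂ)‖⁻¹ := inv_pos.mpr (norm_pos_iff.mpr q.2.2)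
  have ht0 : 0 ≤ (q.1 : ℝ) := q.1.2.1
  have ht1 : (q.1 : ℝ) ≤ 1 := q.1.2.2
  apply smul_ne_zero _ q.2.2
  rcases eq_or_lt_of_le ht0 with h | h
  · rw [← h]
    simp only [sub_zero, one_mul, add_zero]
    exact ne_of_gt hwpos
  · have : 0 < (1 - (q.1 : ℝ)) * ‖(q.2 : ℂ)‖⁻¹ + (q.1 : ℝ) :=
      add_pos_of_nonneg_of_pos (mul_nonneg (by linarith) (le_of_lt hwpos)) h
    exact ne_of_gt this

noncomputable def circleHomotopy :
    ContinuousMap.Homotopy (fromCircle.comp toCircle) (ContinuousMap.id {w : ℂ // w ≠ 0}) := by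
  refine
    { toContinuousMap := ⟨fun q =>
        ⟨(((1 - (q.1 : ℝ)) * ‖(q.2 : ℂ)‖⁻¹ + (q.1 : ℝ)) : ℝ) • (q.2 : ℂ),
          circleCoeff_ne q⟩, ?_⟩,
      map_zero_left := ?_, map_one_left := ?_ }
  · apply Continuous.subtype_mk
    apply Continuous.fun_smul
    · apply Continuous.add
      · exact (continuous_const.sub
          (continuous_subtype_val.comp continuous_fst)).mul
          (((continuous_subtype_val.comp continuous_snd).norm).inv₀
            (fun q : unitInterval × {w : ℂ // w ≠ 0} => norm_ne_zero_iff.mpr q.2.2))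
      · exact continuous_subtype_val.comp continuous_fst
    · exact continuous_subtype_val.comp continuous_snd
  · intro w
    apply Subtype.ext
    simp only [ContinuousMap.coe_mk, ContinuousMap.comp_apply, fromCircle, toCircle]
    have h0 : ((0:unitInterval):ℝ) = 0 := rfl
    rw [h0]
    norm_num
  · intro w
    apply Subtype.ext
    simp only [ContinuousMap.coe_mk, ContinuousMap.id_apply]
    have h1 : ((1:unitInterval):ℝ) = 1 := rfl
    rw [h1]
    norm_num

/-- `ℂ ∖ {0}` is homotopy equivalent to the unit circle. -/
noncomputable def sphereEquiv :
    ContinuousMap.HomotopyEquiv {w : ℂ // w ≠ 0} (Metric.sphere (0:ℂ) 1) where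
  toFun := toCircle
  invFun := fromCircle
  left_inv := ⟨circleHomotopy⟩
  right_inv := by
    have h : toCircle.comp fromCircle = ContinuousMap.id _ := by
      apply ContinuousMap.ext
      intro s
      apply Subtype.ext
      simp only [ContinuousMap.comp_apply, ContinuousMap.id_apply, toCircle, fromCircle,
        ContinuousMap.coe_mk]
      rw [mem_sphere_zero_iff_norm.mp s.2, inv_one, one_smul]
    rw [h]

end MLUAux


/-- The space of complex `m × m` matrices `A` with `det (A^(k)) ≠ 0` for
`k = 1, …, m` and `det (Â^(j)) ≠ 0` for `j = 1, …, m - 1` (where `Â` deletes the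
first column of `A`) is homotopy equivalent to the `(2m-1)`-torus `(S¹)^(2m-1)`. -/
theorem modified_lu_complement_homotopy_torus (m : ℕ) (hm : 2 ≤ m) :
    Nonempty (ContinuousMap.HomotopyEquiv
      {A : Matrix (Fin m) (Fin m) ℂ //
        (∀ k : ℕ, 1 ≤ k → ∀ hk : k ≤ m,
          (A.submatrix (Fin.castLE hk) (Fin.castLE hk)).det ≠ 0) ∧
        (∀ j : ℕ, 1 ≤ j → ∀ hj : j ≤ m - 1,
          (Matrix.of fun a b : Fin j =>
            A (Fin.castLE (by omega) a) ⟨(b : ℕ) + 1, by have := b.isLt; omega⟩).det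
            ≠ 0)}
      (Fin (2 * m - 1) → Metric.sphere (0 : ℂ) 1)) := by
  refine ⟨?_⟩
  have hset : {A : Matrix (Fin m) (Fin m) ℂ |
      (∀ k : ℕ, 1 ≤ k → ∀ hk : k ≤ m,
        (A.submatrix (Fin.castLE hk) (Fin.castLE hk)).det ≠ 0) ∧
      (∀ j : ℕ, 1 ≤ j → ∀ hj : j ≤ m - 1,
        (Matrix.of fun a b : Fin j =>
          A (Fin.castLE (by omega) a) ⟨(b : ℕ) + 1, by have := b.isLt; omega⟩).det
          ≠ 0)}
      = MLUAux.goodSet m := by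
    ext A
    simp only [Set.mem_setOf_eq, MLUAux.goodSet]
    constructor
    · rintro ⟨h1, h2⟩
      refine ⟨fun l hl1 hl2 => ?_, fun j hj1 hj2 => ?_⟩
      · rw [MLUAux.Dm, dif_pos hl2]
        exact h1 l hl1 hl2
      · rw [MLUAux.Em, dif_pos hj2]
        exact h2 j hj1 (by omega)
    · rintro ⟨h1, h2⟩
      refine ⟨fun k hk1 hk2 => ?_, fun j hj1 hj2 => ?_⟩
      · have h := h1 k hk1 hk2
        rw [MLUAux.Dm, dif_pos hk2] at h
        exact h
      · have h := h2 j hj1 (by omega)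
        rw [MLUAux.Em, dif_pos (show j < m by omega)] at h
        exact h
  exact ((Homeomorph.setCongr hset).toHomotopyEquiv.trans MLUAux.mainEquiv).trans
    (ContinuousMap.HomotopyEquiv.piCongrRight fun _ => MLUAux.sphereEquiv)
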